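/- arXiv:2303.14976 — 2 statements merged into one kernel-verified Lean document; each statement's English description precedes it below -/
import Mathlib

section
/- Completeness of EC_n for generalized epistemic models: every formula consistent with EC_n is satisfiable at some world of some generalized epistemic model; equivalently, every formula valid in all generalized epistemic models is a theorem of EC_n. -/
/-- Formulas of epistemic logic with distributed knowledge:
atomic propositions, falsum, implication, and `D U φ` for groups `U` of agents. -/
inductive Fml (A : Type) : Type
  | atom : ℕ → Fml A
  | fls : Fml A
  | imp : Fml A → Fml A → Fml A
  | D : Finset A → Fml A → Fml A

namespace Fml
variable {A : Type}
/-- Negation. -/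
def neg (φ : Fml A) : Fml A := imp φ fls
/-- Truth. -/
def tru : Fml A := neg (fls (A := A))
/-- Conjunction. -/
def and (φ ψ : Fml A) : Fml A := neg (imp φ (neg ψ))
/-- `alive U := ¬ D_U ¬⊤`. -/
def alive (U : Finset A) : Fml A := neg (D U (neg tru))
/-- `dead a := K_a ⊥`. -/
def dead (a : A) : Fml A := D {a} fls
end Fml

/-- Propositional tautologies: formulas true under every valuation that
interprets `imp` and `fls` classically (atoms and `D`-formulas arbitrary). -/
def Taut {A : Type} (φ : Fml A) : Prop :=
  ∀ v : Fml A → Prop,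
    (∀ ψ χ : Fml A, v (Fml.imp ψ χ) ↔ (v ψ → v χ)) → ¬ v Fml.fls → v φ

/-- The Hilbert system EC_n: propositional tautologies, modus ponens,
necessitation, and axioms K, 4, B, Mono, Union. -/
inductive Prov {A : Type} [DecidableEq A] : Fml A → Prop
  | taut {φ : Fml A} : Taut φ → Prov φ
  | mp {φ ψ : Fml A} : Prov (Fml.imp φ ψ) → Prov φ → Prov ψ
  | nec (U : Finset A) {φ : Fml A} : Prov φ → Prov (Fml.D U φ)
  | axK (U : Finset A) (φ ψ : Fml A) :
      Prov (Fml.imp (Fml.D U (Fml.imp φ ψ)) (Fml.imp (Fml.D U φ) (Fml.D U ψ)))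
  | ax4 (U : Finset A) (φ : Fml A) :
      Prov (Fml.imp (Fml.D U φ) (Fml.D U (Fml.D U φ)))
  | axB (U : Finset A) (φ : Fml A) :
      Prov (Fml.imp φ (Fml.D U (Fml.neg (Fml.D U (Fml.neg φ)))))
  | axMono {U U' : Finset A} (φ : Fml A) :
      U ⊆ U' → Prov (Fml.imp (Fml.D U φ) (Fml.D U' φ))
  | axUnion (U U' : Finset A) :
      Prov (Fml.imp (Fml.and (Fml.alive U) (Fml.alive U')) (Fml.alive (U ∪ U')))

/-- A generalized epistemic model: worlds, a PER `rel U` for each group `U`,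
monotone in `U`, closed under union of alive groups, and a valuation. -/
structure GEM (A : Type) [DecidableEq A] where
  W : Type
  rel : Finset A → W → W → Prop
  symm : ∀ U w w', rel U w w' → rel U w' w
  trans : ∀ U w₁ w₂ w₃, rel U w₁ w₂ → rel U w₂ w₃ → rel U w₁ w₃
  mono : ∀ (U U' : Finset A), U ⊆ U' → ∀ w w', rel U' w w' → rel U w w'
  union : ∀ (U U' : Finset A) w, rel U w w → rel U' w w → rel (U ∪ U') w w
  val : W → ℕ → Prop

/-- The satisfaction relation `M, w ⊨ φ`. -/
def Sat {A : Type} [DecidableEq A] (M : GEM A) : M.W → Fml A → Prop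
  | w, Fml.atom p => M.val w p
  | _, Fml.fls => False
  | w, Fml.imp φ ψ => Sat M w φ → Sat M w ψ
  | w, Fml.D U φ => ∀ w', M.rel U w w' → Sat M w' φ

section Aux
variable {A : Type} [DecidableEq A]

/-- Derivability from a set of hypotheses. -/
inductive Ded (S : Set (Fml A)) : Fml A → Prop
  | ax {φ} : φ ∈ S → Ded S φ
  | pr {φ} : Prov φ → Ded S φ
  | mp {φ ψ} : Ded S (Fml.imp φ ψ) → Ded S φ → Ded S ψ

lemma ptaut {φ : Fml A} (h : Taut φ) : Prov φ := Prov.taut h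

lemma Ded.monotone {S S' : Set (Fml A)} {φ : Fml A} (hS : S ⊆ S') (h : Ded S φ) :
    Ded S' φ := by
  induction h with
  | ax h => exact Ded.ax (hS h)
  | pr h => exact Ded.pr h
  | mp _ _ ih1 ih2 => exact Ded.mp ih1 ih2

lemma deduction {S : Set (Fml A)} {φ ψ : Fml A} (h : Ded (insert φ S) ψ) :
    Ded S (Fml.imp φ ψ) := by
  induction h with
  | @ax χ h =>
    rcases h with h | h
    · subst h
      exact Ded.pr (ptaut (by intro v hv hf; simp only [hv]; tauto))
    · exact Ded.mp (Ded.pr (ptaut (by intro v hv hf; simp only [hv]; tauto))) (Ded.ax h)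
  | pr h =>
    exact Ded.mp (Ded.pr (ptaut (by intro v hv hf; simp only [hv]; tauto))) (Ded.pr h)
  | @mp α β _ _ ih1 ih2 =>
    exact Ded.mp (Ded.mp (Ded.pr (ptaut (φ := Fml.imp (Fml.imp φ (Fml.imp α β))
      (Fml.imp (Fml.imp φ α) (Fml.imp φ β)))
      (by intro v hv hf; simp only [hv]; tauto))) ih1) ih2

lemma ded_empty {φ : Fml A} (h : Ded (∅ : Set (Fml A)) φ) : Prov φ := by
  induction h with
  | ax h => exact absurd h (by simp)
  | pr h => exact h
  | mp _ _ ih1 ih2 => exact Prov.mp ih1 ih2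

/-- If `a → b` is provable, then so is `(L ⊢ a) → (L ⊢ b)` folded. -/
lemma fold_imp_mono {a b : Fml A} (h : Prov (Fml.imp a b)) (L : List (Fml A)) :
    Prov (Fml.imp (L.foldr Fml.imp a) (L.foldr Fml.imp b)) := by
  induction L with
  | nil => exact h
  | cons χ L ih =>
    exact Prov.mp (ptaut (φ := Fml.imp (Fml.imp (L.foldr Fml.imp a) (L.foldr Fml.imp b))
      (Fml.imp (Fml.imp χ (L.foldr Fml.imp a)) (Fml.imp χ (L.foldr Fml.imp b))))
      (by intro v hv hf; simp only [hv]; tauto)) ih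

lemma fold_distrib (α β : Fml A) (L : List (Fml A)) :
    Prov (Fml.imp (L.foldr Fml.imp α) (Fml.imp (Fml.imp α β) (L.foldr Fml.imp β))) := by
  induction L with
  | nil => exact ptaut (by intro v hv hf; simp only [hv]; tauto)
  | cons χ L ih =>
    exact Prov.mp (ptaut (φ := Fml.imp
        (Fml.imp (L.foldr Fml.imp α) (Fml.imp (Fml.imp α β) (L.foldr Fml.imp β)))
        (Fml.imp (Fml.imp χ (L.foldr Fml.imp α))
          (Fml.imp (Fml.imp α β) (Fml.imp χ (L.foldr Fml.imp β)))))
      (by intro v hv hf; simp only [hv]; tauto)) ih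

lemma ded_to_list {S : Set (Fml A)} {φ : Fml A} (h : Ded S φ) :
    ∃ L : List (Fml A), (∀ ψ ∈ L, ψ ∈ S) ∧ Prov (L.foldr Fml.imp φ) := by
  induction h with
  | @ax χ h =>
    exact ⟨[χ], by simpa using h, ptaut (by intro v hv hf; simp only [List.foldr, hv]; tauto)⟩
  | pr h => exact ⟨[], by simp, h⟩
  | @mp α β _ _ ih1 ih2 =>
    obtain ⟨L1, hL1, hp1⟩ := ih1
    obtain ⟨L2, hL2, hp2⟩ := ih2
    refine ⟨L1 ++ L2, ?_, ?_⟩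
    · intro ψ hψ; rcases List.mem_append.1 hψ with h | h
      · exact hL1 ψ h
      · exact hL2 ψ h
    · rw [List.foldr_append]
      have h1 : Prov (Fml.imp (Fml.imp α β) (L2.foldr Fml.imp β)) :=
        Prov.mp (fold_distrib α β L2) hp2
      exact Prov.mp (fold_imp_mono h1 L1) hp1

lemma ded_of_fold {S : Set (Fml A)} {φ : Fml A} {L : List (Fml A)}
    (hL : ∀ ψ ∈ L, ψ ∈ S) (hd : Ded S (L.foldr Fml.imp φ)) : Ded S φ := by
  induction L with
  | nil => exact hd
  | cons χ L ih =>
    exact ih (fun ψ hψ => hL ψ (List.mem_cons_of_mem _ hψ))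
      (Ded.mp hd (Ded.ax (hL χ List.mem_cons_self)))

lemma list_to_ded {S : Set (Fml A)} {φ : Fml A} {L : List (Fml A)}
    (hL : ∀ ψ ∈ L, ψ ∈ S) (hp : Prov (L.foldr Fml.imp φ)) : Ded S φ :=
  ded_of_fold hL (Ded.pr hp)

/-- Consistency. -/
def Consis (S : Set (Fml A)) : Prop := ¬ Ded S Fml.fls

/-- Maximal consistent set. -/
def MCS (Γ : Set (Fml A)) : Prop := Consis Γ ∧ ∀ ψ, Consis (insert ψ Γ) → ψ ∈ Γ

lemma mcs_ded {Γ : Set (Fml A)} (hΓ : MCS Γ) {φ : Fml A} (h : Ded Γ φ) : φ ∈ Γ := by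
  apply hΓ.2
  intro hcon
  apply hΓ.1
  exact Ded.mp (deduction hcon) h

lemma mcs_prov {Γ : Set (Fml A)} (hΓ : MCS Γ) {φ : Fml A} (h : Prov φ) : φ ∈ Γ :=
  mcs_ded hΓ (Ded.pr h)

lemma mcs_fls {Γ : Set (Fml A)} (hΓ : MCS Γ) : Fml.fls ∉ Γ :=
  fun h => hΓ.1 (Ded.ax h)

lemma mcs_neg_of_not_mem {Γ : Set (Fml A)} (hΓ : MCS Γ) {φ : Fml A} (h : φ ∉ Γ) :
    Fml.neg φ ∈ Γ := by
  apply hΓ.2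
  intro hcon
  apply h
  apply hΓ.2
  intro hcon2
  exact hΓ.1 (Ded.mp (deduction hcon) (deduction hcon2))

lemma mcs_not_mem_of_neg {Γ : Set (Fml A)} (hΓ : MCS Γ) {φ : Fml A}
    (h : Fml.neg φ ∈ Γ) : φ ∉ Γ := by
  intro hφ
  exact hΓ.1 (Ded.mp (Ded.ax h) (Ded.ax hφ))

lemma mcs_imp {Γ : Set (Fml A)} (hΓ : MCS Γ) {φ ψ : Fml A} :
    Fml.imp φ ψ ∈ Γ ↔ (φ ∈ Γ → ψ ∈ Γ) := by
  constructor
  · intro h hφ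
    exact mcs_ded hΓ (Ded.mp (Ded.ax h) (Ded.ax hφ))
  · intro h
    by_cases hφ : φ ∈ Γ
    · apply mcs_ded hΓ
      exact Ded.mp (Ded.pr (ptaut (φ := Fml.imp ψ (Fml.imp φ ψ))
        (by intro v hv hf; simp only [hv]; tauto))) (Ded.ax (h hφ))
    · have := mcs_neg_of_not_mem hΓ hφ
      apply mcs_ded hΓ
      exact Ded.mp (Ded.pr (ptaut (φ := Fml.imp (Fml.neg φ) (Fml.imp φ ψ))
        (by intro v hv hf; simp only [Fml.neg, hv]; tauto))) (Ded.ax this)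

/-- Lindenbaum's lemma. -/
lemma lindenbaum {S : Set (Fml A)} (hS : Consis S) : ∃ Γ, S ⊆ Γ ∧ MCS Γ := by
  obtain ⟨Γ, hsub, hmax⟩ := zorn_subset_nonempty {T : Set (Fml A) | Consis T}
    (fun c hc hchain hne => by
      refine ⟨⋃₀ c, ?_, fun s hs => Set.subset_sUnion_of_mem hs⟩
      intro hded
      obtain ⟨L, hL, hp⟩ := ded_to_list hded
      -- find a single member of the chain containing all of L
      have : ∃ s ∈ c, ∀ ψ ∈ L, ψ ∈ s := by
        clear hp
        induction L with
        | nil => obtain ⟨s, hs⟩ := hne; exact ⟨s, hs, by simp⟩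
        | cons χ L ih =>
          obtain ⟨s1, hs1, hs1'⟩ := ih (fun ψ hψ => hL ψ (List.mem_cons_of_mem _ hψ))
          obtain ⟨s2, hs2, hs2'⟩ := hL χ List.mem_cons_self
          rcases hchain.total hs1 hs2 with h | h
          · exact ⟨s2, hs2, by
              intro ψ hψ
              rcases List.mem_cons.1 hψ with rfl | hψ
              · exact hs2'
              · exact h (hs1' ψ hψ)⟩
          · exact ⟨s1, hs1, by
              intro ψ hψ
              rcases List.mem_cons.1 hψ with rfl | hψ
              · exact h hs2'
              · exact hs1' ψ hψ⟩
      obtain ⟨s, hsc, hsL⟩ := this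
      exact hc hsc (list_to_ded hsL hp)) S hS
  refine ⟨Γ, hsub, hmax.prop, fun ψ hψ => ?_⟩
  exact hmax.2 hψ (Set.subset_insert _ _) (Set.mem_insert _ _)

lemma D_mono_rule {U : Finset A} {φ ψ : Fml A} (h : Prov (Fml.imp φ ψ)) :
    Prov (Fml.imp (Fml.D U φ) (Fml.D U ψ)) :=
  Prov.mp (Prov.axK U φ ψ) (Prov.nec U h)

/-- `D U (L.foldr imp χ) → (L.map (D U)).foldr imp (D U χ)` is provable. -/
lemma fold_D (U : Finset A) (χ : Fml A) (L : List (Fml A)) :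
    Prov (Fml.imp (Fml.D U (L.foldr Fml.imp χ))
      ((L.map (Fml.D U)).foldr Fml.imp (Fml.D U χ))) := by
  induction L with
  | nil => exact ptaut (by intro v hv hf; simp only [List.foldr, hv]; tauto)
  | cons φ L ih =>
    have hK := Prov.axK U φ (L.foldr Fml.imp χ)
    -- hK : D(φ→R) → (Dφ → D R);  ih : D R → rest
    -- combine: (X→(Y→Z)) → ((Z→W) → (X→(Y→W)))
    have comb : Prov (Fml.imp
        (Fml.imp (Fml.D U (Fml.imp φ (L.foldr Fml.imp χ)))
          (Fml.imp (Fml.D U φ) (Fml.D U (L.foldr Fml.imp χ))))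
        (Fml.imp
          (Fml.imp (Fml.D U (L.foldr Fml.imp χ))
            ((L.map (Fml.D U)).foldr Fml.imp (Fml.D U χ)))
          (Fml.imp (Fml.D U (Fml.imp φ (L.foldr Fml.imp χ)))
            (Fml.imp (Fml.D U φ) ((L.map (Fml.D U)).foldr Fml.imp (Fml.D U χ)))))) :=
      ptaut (by intro v hv hf; simp only [hv]; tauto)
    exact Prov.mp (Prov.mp comb hK) ih

/-- The canonical model. -/
def canon (A : Type) [DecidableEq A] : GEM A where
  W := {Γ : Set (Fml A) // MCS Γ}
  rel U Γ Δ := ∀ φ, Fml.D U φ ∈ Γ.1 → φ ∈ Δ.1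
  symm := by
    intro U Γ Δ h φ hφ
    by_contra hc
    have hneg : Fml.neg φ ∈ Γ.1 := mcs_neg_of_not_mem Γ.2 hc
    have h1 : Fml.D U (Fml.neg (Fml.D U (Fml.neg (Fml.neg φ)))) ∈ Γ.1 :=
      mcs_ded Γ.2 (Ded.mp (Ded.pr (Prov.axB U (Fml.neg φ))) (Ded.ax hneg))
    have h2 : Fml.neg (Fml.D U (Fml.neg (Fml.neg φ))) ∈ Δ.1 := h _ h1
    have h3 : Fml.D U (Fml.neg (Fml.neg φ)) ∈ Δ.1 :=
      mcs_ded Δ.2 (Ded.mp (Ded.pr (D_mono_rule (ptaut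
        (by intro v hv hf; simp only [Fml.neg, hv]; tauto)))) (Ded.ax hφ))
    exact mcs_not_mem_of_neg Δ.2 h2 h3
  trans := by
    intro U Γ₁ Γ₂ Γ₃ h12 h23 φ hφ
    apply h23
    apply h12
    exact mcs_ded Γ₁.2 (Ded.mp (Ded.pr (Prov.ax4 U φ)) (Ded.ax hφ))
  mono := by
    intro U U' hUU' Γ Δ h φ hφ
    exact h φ (mcs_ded Γ.2 (Ded.mp (Ded.pr (Prov.axMono φ hUU')) (Ded.ax hφ)))
  union := by
    intro U U' Γ hU hU'
    -- alive U ∈ Γ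
    have alive_mem : ∀ (V : Finset A), (∀ φ, Fml.D V φ ∈ Γ.1 → φ ∈ Γ.1) →
        Fml.alive V ∈ Γ.1 := by
      intro V hV
      apply mcs_neg_of_not_mem Γ.2
      intro hD
      have := hV _ hD
      exact Γ.2.1 (Ded.mp (Ded.pr (ptaut (φ := Fml.imp (Fml.neg Fml.tru) Fml.fls)
        (by intro v hv hf; simp only [Fml.neg, Fml.tru, hv]; tauto))) (Ded.ax this))
    have hAU := alive_mem U hU
    have hAU' := alive_mem U' hU'
    have hand : Fml.and (Fml.alive U) (Fml.alive U') ∈ Γ.1 := by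
      apply mcs_ded Γ.2
      exact Ded.mp (Ded.mp (Ded.pr (ptaut (φ := Fml.imp (Fml.alive U)
        (Fml.imp (Fml.alive U') (Fml.and (Fml.alive U) (Fml.alive U'))))
        (by intro v hv hf; simp only [Fml.and, Fml.neg, hv]; tauto))) (Ded.ax hAU))
        (Ded.ax hAU')
    have halive : Fml.alive (U ∪ U') ∈ Γ.1 :=
      mcs_ded Γ.2 (Ded.mp (Ded.pr (Prov.axUnion U U')) (Ded.ax hand))
    -- hence D (U∪U') fls ∉ Γ
    have hDfls : Fml.D (U ∪ U') Fml.fls ∉ Γ.1 := by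
      intro hD
      have h1 : Fml.D (U ∪ U') (Fml.neg Fml.tru) ∈ Γ.1 :=
        mcs_ded Γ.2 (Ded.mp (Ded.pr (D_mono_rule (ptaut
          (φ := Fml.imp Fml.fls (Fml.neg Fml.tru))
          (by intro v hv hf; simp only [Fml.neg, Fml.tru, hv]; tauto)))) (Ded.ax hD))
      exact mcs_not_mem_of_neg Γ.2 halive h1
    -- existence: get Δ with rel (U∪U') Γ Δ
    have hcon : Consis ({φ | Fml.D (U ∪ U') φ ∈ Γ.1} : Set (Fml A)) := by
      intro hded
      obtain ⟨L, hL, hp⟩ := ded_to_list hded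
      have h2 : Prov (Fml.imp (Fml.D (U ∪ U') (L.foldr Fml.imp Fml.fls))
          ((L.map (Fml.D (U ∪ U'))).foldr Fml.imp (Fml.D (U ∪ U') Fml.fls))) :=
        fold_D (U ∪ U') Fml.fls L
      have h3 : Prov ((L.map (Fml.D (U ∪ U'))).foldr Fml.imp (Fml.D (U ∪ U') Fml.fls)) :=
        Prov.mp h2 (Prov.nec _ hp)
      have h4 : Ded Γ.1 (Fml.D (U ∪ U') Fml.fls) := by
        apply list_to_ded (S := Γ.1) (L := L.map (Fml.D (U ∪ U'))) _ h3
        intro ψ hψ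
        obtain ⟨χ, hχ, rfl⟩ := List.mem_map.1 hψ
        exact hL χ hχ
      exact hDfls (mcs_ded Γ.2 h4)
    obtain ⟨Δ, hΔsub, hΔ⟩ := lindenbaum hcon
    have hrel : ∀ φ, Fml.D (U ∪ U') φ ∈ Γ.1 → φ ∈ Δ := fun φ hφ => hΔsub hφ
    -- symmetry then transitivity gives rel Γ Γ; but we are *defining* the model,
    -- so we inline: rel (U∪U') Γ Γ means ∀ φ, D (U∪U') φ ∈ Γ → φ ∈ Γ.
    intro φ hφ
    -- D φ ∈ Γ. By ax4, D D φ ∈ Γ, so D φ ∈ Δ. Use symmetry argument from Δ back to Γ.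
    by_contra hc
    have hneg : Fml.neg φ ∈ Γ.1 := mcs_neg_of_not_mem Γ.2 hc
    have h1 : Fml.D (U ∪ U') (Fml.neg (Fml.D (U ∪ U') (Fml.neg (Fml.neg φ)))) ∈ Γ.1 :=
      mcs_ded Γ.2 (Ded.mp (Ded.pr (Prov.axB (U ∪ U') (Fml.neg φ))) (Ded.ax hneg))
    have h2 : Fml.neg (Fml.D (U ∪ U') (Fml.neg (Fml.neg φ))) ∈ Δ := hrel _ h1
    have hDDφ : Fml.D (U ∪ U') (Fml.D (U ∪ U') φ) ∈ Γ.1 :=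
      mcs_ded Γ.2 (Ded.mp (Ded.pr (Prov.ax4 (U ∪ U') φ)) (Ded.ax hφ))
    have hDφΔ : Fml.D (U ∪ U') φ ∈ Δ := hrel _ hDDφ
    have h3 : Fml.D (U ∪ U') (Fml.neg (Fml.neg φ)) ∈ Δ :=
      mcs_ded hΔ (Ded.mp (Ded.pr (D_mono_rule (ptaut
        (by intro v hv hf; simp only [Fml.neg, hv]; tauto)))) (Ded.ax hDφΔ))
    exact mcs_not_mem_of_neg hΔ h2 h3
  val Γ n := Fml.atom n ∈ Γ.1

/-- Existence lemma. -/
lemma existence {Γ : Set (Fml A)} (hΓ : MCS Γ) {U : Finset A} {χ : Fml A}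
    (h : Fml.D U χ ∉ Γ) :
    ∃ Δ : Set (Fml A), MCS Δ ∧ (∀ φ, Fml.D U φ ∈ Γ → φ ∈ Δ) ∧ Fml.neg χ ∈ Δ := by
  have hcon : Consis (insert (Fml.neg χ) {φ | Fml.D U φ ∈ Γ}) := by
    intro hded
    have h1 : Ded ({φ | Fml.D U φ ∈ Γ} : Set (Fml A)) (Fml.imp (Fml.neg χ) Fml.fls) :=
      deduction hded
    have h2 : Ded ({φ | Fml.D U φ ∈ Γ} : Set (Fml A)) χ :=
      Ded.mp (Ded.pr (ptaut (φ := Fml.imp (Fml.imp (Fml.neg χ) Fml.fls) χ)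
        (by intro v hv hf; simp only [Fml.neg, hv]; tauto))) h1
    obtain ⟨L, hL, hp⟩ := ded_to_list h2
    have h3 : Prov ((L.map (Fml.D U)).foldr Fml.imp (Fml.D U χ)) :=
      Prov.mp (fold_D U χ L) (Prov.nec _ hp)
    have h4 : Ded Γ (Fml.D U χ) := by
      apply list_to_ded (S := Γ) (L := L.map (Fml.D U)) _ h3
      intro ψ hψ
      obtain ⟨φ, hφ, rfl⟩ := List.mem_map.1 hψ
      exact hL φ hφ
    exact h (mcs_ded hΓ h4)
  obtain ⟨Δ, hΔsub, hΔ⟩ := lindenbaum hcon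
  exact ⟨Δ, hΔ, fun φ hφ => hΔsub (Set.mem_insert_of_mem _ hφ),
    hΔsub (Set.mem_insert _ _)⟩

/-- Truth lemma for the canonical model. -/
lemma truth_lemma (φ : Fml A) (Γ : (canon A).W) :
    Sat (canon A) Γ φ ↔ φ ∈ Γ.1 := by
  induction φ generalizing Γ with
  | atom p => exact Iff.rfl
  | fls => simpa [Sat] using mcs_fls Γ.2
  | imp φ ψ ihφ ihψ =>
    simp only [Sat, ihφ, ihψ]
    exact (mcs_imp Γ.2).symm
  | D U φ ih =>
    constructor
    · intro h
      by_contra hc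
      obtain ⟨Δ, hΔ, hrel, hneg⟩ := existence Γ.2 hc
      have := h ⟨Δ, hΔ⟩ hrel
      have this := (ih ⟨Δ, hΔ⟩).1 this
      exact mcs_not_mem_of_neg hΔ hneg this
    · intro h Δ hrel
      rw [ih]
      exact hrel φ h
end Aux

/-- Completeness of EC_n for generalized epistemic models: every consistent
formula is satisfiable, and equivalently every valid formula is a theorem. -/
theorem stmt12 {A : Type} [DecidableEq A] (φ : Fml A) :
    (¬ Prov (Fml.imp φ Fml.fls) → ∃ (M : GEM A) (w : M.W), Sat M w φ) ∧
    ((∀ (M : GEM A) (w : M.W), Sat M w φ) → Prov φ) := by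
  constructor
  · intro h
    have hcon : Consis ({φ} : Set (Fml A)) := by
      intro hded
      apply h
      apply ded_empty
      have : Ded (∅ : Set (Fml A)) (Fml.imp φ Fml.fls) := by
        apply deduction
        simpa using hded
      exact this
    obtain ⟨Γ, hsub, hΓ⟩ := lindenbaum hcon
    refine ⟨canon A, ⟨Γ, hΓ⟩, ?_⟩
    refine (truth_lemma φ ⟨Γ, hΓ⟩).2 ?_
    exact hsub rfl
  · intro h
    by_contra hnp
    have hcon : Consis ({Fml.neg φ} : Set (Fml A)) := by
      intro hded
      apply hnp
      have h1 : Ded (∅ : Set (Fml A)) (Fml.imp (Fml.neg φ) Fml.fls) := by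
        apply deduction
        simpa using hded
      have h2 : Prov (Fml.imp (Fml.neg φ) Fml.fls) := ded_empty h1
      exact Prov.mp (ptaut (φ := Fml.imp (Fml.imp (Fml.neg φ) Fml.fls) φ)
        (by intro v hv hf; simp only [Fml.neg, hv]; tauto)) h2
    obtain ⟨Γ, hsub, hΓ⟩ := lindenbaum hcon
    have hsat := h (canon A) ⟨Γ, hΓ⟩
    have hsat := (truth_lemma φ ⟨Γ, hΓ⟩).1 hsat
    exact mcs_not_mem_of_neg hΓ (hsub rfl) hsat
end

section
/- Axiom Min (alive(U) ∧ dead(U^c) ⇒ D_U dead(U^c)) is valid in every minimal generalized epistemic model, and in the canonical model of EC_n + Min, there are no strict sub-worlds: if live(Γ) ⊊ live(Δ) then Γ ≁_{live(Γ)} Δ. -/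
/-- The Hilbert system EC_n extended with an extra set `Ax` of axioms. -/
inductive ProvE {A : Type} [DecidableEq A] (Ax : Set (Fml A)) : Fml A → Prop
  | taut {φ : Fml A} : Taut φ → ProvE Ax φ
  | extra {φ : Fml A} : φ ∈ Ax → ProvE Ax φ
  | mp {φ ψ : Fml A} : ProvE Ax (Fml.imp φ ψ) → ProvE Ax φ → ProvE Ax ψ
  | nec (U : Finset A) {φ : Fml A} : ProvE Ax φ → ProvE Ax (Fml.D U φ)
  | axK (U : Finset A) (φ ψ : Fml A) :
      ProvE Ax (Fml.imp (Fml.D U (Fml.imp φ ψ)) (Fml.imp (Fml.D U φ) (Fml.D U ψ)))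
  | ax4 (U : Finset A) (φ : Fml A) :
      ProvE Ax (Fml.imp (Fml.D U φ) (Fml.D U (Fml.D U φ)))
  | axB (U : Finset A) (φ : Fml A) :
      ProvE Ax (Fml.imp φ (Fml.D U (Fml.neg (Fml.D U (Fml.neg φ)))))
  | axMono {U U' : Finset A} (φ : Fml A) :
      U ⊆ U' → ProvE Ax (Fml.imp (Fml.D U φ) (Fml.D U' φ))
  | axUnion (U U' : Finset A) :
      ProvE Ax (Fml.imp (Fml.and (Fml.alive U) (Fml.alive U')) (Fml.alive (U ∪ U')))

variable {A : Type} [DecidableEq A]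

/-- Consistency with respect to the extended system. -/
def ConSetE (Ax : Set (Fml A)) (Γ : Set (Fml A)) : Prop :=
  ¬ ∃ l : List (Fml A), (∀ ψ ∈ l, ψ ∈ Γ) ∧
      ProvE Ax (Fml.imp (l.foldr Fml.and Fml.tru) Fml.fls)

/-- Maximal consistent sets with respect to the extended system. -/
def MCSE (Ax : Set (Fml A)) (Γ : Set (Fml A)) : Prop :=
  ConSetE Ax Γ ∧ ∀ φ : Fml A, φ ∉ Γ → ¬ ConSetE Ax (insert φ Γ)

/-- The canonical accessibility relation: `Γ ∼_U Δ` iff `D_U φ ∈ Γ` implies `φ ∈ Δ`. -/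
def canRel (U : Finset A) (Γ Δ : Set (Fml A)) : Prop :=
  ∀ φ : Fml A, Fml.D U φ ∈ Γ → φ ∈ Δ

attribute [local instance] Classical.propDecidable

/-- `dead V := ⋀_{a ∈ V} K_a ⊥`. -/
noncomputable def deadG {A : Type} (V : Finset A) : Fml A :=
  (V.toList.map fun a => Fml.D {a} Fml.fls).foldr Fml.and Fml.tru

variable {A : Type} [DecidableEq A] [Fintype A]

/-- The set of alive agents of a world: those `a` with `w ∼_{{a}} w`
(which, by union closure and monotonicity, is the maximal `U` with `w ∼_U w`). -/
noncomputable def liveF (M : GEM A) (w : M.W) : Finset A :=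
  Finset.univ.filter fun a => M.rel {a} w w

/-- The set of alive agents of a maximal consistent set in the canonical model. -/
noncomputable def liveC (Γ : Set (Fml A)) : Finset A :=
  Finset.univ.filter fun a => canRel {a} Γ Γ

/-- All instances of axiom Min: `alive U ∧ dead Uᶜ ⇒ D_U (dead Uᶜ)`. -/
def AxMin : Set (Fml A) :=
  {χ | ∃ U : Finset A,
    χ = Fml.imp (Fml.and (Fml.alive U) (deadG Uᶜ)) (Fml.D U (deadG Uᶜ))}


section Helpers
open Fml

set_option linter.unusedSectionVars false

variable {Ax : Set (Fml A)} {Γ : Set (Fml A)} {φ ψ χ : Fml A}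

/-- Fold a list of formulas into a conjunction. -/
abbrev foldC (l : List (Fml A)) : Fml A := l.foldr Fml.and Fml.tru

lemma imp_trans (h1 : ProvE Ax (imp φ ψ)) (h2 : ProvE Ax (imp ψ χ)) :
    ProvE Ax (imp φ χ) := by
  have t : ProvE Ax (imp (imp φ ψ) (imp (imp ψ χ) (imp φ χ))) := by
    apply ProvE.taut; intro v hv hf; simp only [hv]; tauto
  exact (t.mp h1).mp h2

lemma proj {l : List (Fml A)} (h : ψ ∈ l) : ProvE Ax (imp (foldC l) ψ) := by
  induction l with
  | nil => cases h
  | cons a t ih =>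
    rcases List.mem_cons.1 h with rfl | h
    · apply ProvE.taut; intro v hv hf
      simp only [List.foldr, Fml.and, Fml.neg, hv]; tauto
    · refine imp_trans ?_ (ih h)
      apply ProvE.taut; intro v hv hf
      simp only [List.foldr, Fml.and, Fml.neg, hv]; tauto

lemma fold_intro {l : List (Fml A)} (h : ∀ ψ ∈ l, ProvE Ax (imp χ ψ)) :
    ProvE Ax (imp χ (foldC l)) := by
  induction l with
  | nil =>
    apply ProvE.taut; intro v hv hf
    simp only [foldC, List.foldr, Fml.tru, Fml.neg, hv]; tauto
  | cons a t ih =>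
    have h1 := h a List.mem_cons_self
    have h2 := ih (fun ψ hψ => h ψ (List.mem_cons_of_mem _ hψ))
    have t0 : ProvE Ax (imp (imp χ a) (imp (imp χ (foldC t))
        (imp χ (and a (foldC t))))) := by
      apply ProvE.taut; intro v hv hf
      simp only [Fml.and, Fml.neg, hv]; tauto
    exact (t0.mp h1).mp h2

lemma mcs_ded_s15 (hΓ : MCSE Ax Γ) {l : List (Fml A)} (hl : ∀ ψ ∈ l, ψ ∈ Γ)
    (hp : ProvE Ax (imp (foldC l) φ)) : φ ∈ Γ := by
  by_contra hφ
  have hins := hΓ.2 φ hφ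
  rw [ConSetE, not_not] at hins
  obtain ⟨l', hl', hp'⟩ := hins
  apply hΓ.1
  classical
  refine ⟨l ++ l'.filter (fun ψ => decide (ψ ∈ Γ)), ?_, ?_⟩
  · intro ψ hψ
    rcases List.mem_append.1 hψ with h | h
    · exact hl ψ h
    · exact of_decide_eq_true (List.mem_filter.1 h).2
  · set m := l ++ l'.filter (fun ψ => decide (ψ ∈ Γ)) with hm
    have hml : ProvE Ax (imp (foldC m) (foldC l)) :=
      fold_intro fun ψ hψ => proj (List.mem_append_left _ hψ)
    have h1 : ProvE Ax (imp (foldC m) φ) := imp_trans hml hp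
    have h2 : ProvE Ax (imp (foldC m) (foldC l')) := by
      apply fold_intro; intro ψ hψ
      by_cases hmem : ψ ∈ Γ
      · exact proj (List.mem_append_right _
          (List.mem_filter.2 ⟨hψ, decide_eq_true hmem⟩))
      · have hψφ : ψ = φ := by
          rcases Set.mem_insert_iff.1 (hl' ψ hψ) with h | h
          · exact h
          · exact absurd h hmem
        subst hψφ; exact h1
    exact imp_trans h2 hp'

lemma mcs_thm (hΓ : MCSE Ax Γ) (hp : ProvE Ax φ) : φ ∈ Γ := by
  refine mcs_ded_s15 hΓ (l := []) (by simp) ?_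
  have t : ProvE Ax (imp φ (imp Fml.tru φ)) := by
    apply ProvE.taut; intro v hv hf; simp only [hv]; tauto
  exact t.mp hp

lemma mcs_mp (hΓ : MCSE Ax Γ) (h : φ ∈ Γ) (hp : ProvE Ax (imp φ ψ)) : ψ ∈ Γ := by
  refine mcs_ded_s15 hΓ (l := [φ]) (by simpa using h) ?_
  refine imp_trans ?_ hp
  apply ProvE.taut; intro v hv hf
  simp only [List.foldr, Fml.and, Fml.neg, hv]; tauto

lemma mcs_mp2 (hΓ : MCSE Ax Γ) (hp : ProvE Ax (imp φ (imp ψ χ)))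
    (h1 : φ ∈ Γ) (h2 : ψ ∈ Γ) : χ ∈ Γ := by
  refine mcs_ded_s15 hΓ (l := [φ, ψ]) ?_ ?_
  · intro θ hθ
    rcases List.mem_cons.1 hθ with rfl | hθ
    · exact h1
    · rcases List.mem_cons.1 hθ with rfl | hθ
      · exact h2
      · cases hθ
  · have t : ProvE Ax (imp (imp φ (imp ψ χ)) (imp (foldC [φ, ψ]) χ)) := by
      apply ProvE.taut; intro v hv hf
      simp only [List.foldr, Fml.and, Fml.neg, hv]; tauto
    exact t.mp hp

lemma mcs_fls_s15 (hΓ : MCSE Ax Γ) : Fml.fls ∉ Γ := by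
  intro h
  apply hΓ.1
  refine ⟨[Fml.fls], by simpa using h, ?_⟩
  apply ProvE.taut; intro v hv hf
  simp only [List.foldr, Fml.and, Fml.neg, hv]; tauto

lemma mcs_neg (hΓ : MCSE Ax Γ) (h : φ ∉ Γ) : Fml.neg φ ∈ Γ := by
  have hins := hΓ.2 φ h
  rw [ConSetE, not_not] at hins
  obtain ⟨l', hl', hp'⟩ := hins
  classical
  set m := l'.filter (fun ψ => decide (ψ ∈ Γ)) with hm
  have hmem : ∀ ψ ∈ m, ψ ∈ Γ := fun ψ hψ => of_decide_eq_true (List.mem_filter.1 hψ).2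
  have hstep : ProvE Ax (imp (and φ (foldC m)) (foldC l')) := by
    apply fold_intro; intro ψ hψ
    by_cases hmemΓ : ψ ∈ Γ
    · have hψm : ψ ∈ m := by
        rw [hm]; exact List.mem_filter.2 ⟨hψ, decide_eq_true hmemΓ⟩
      refine imp_trans ?_ (proj hψm)
      apply ProvE.taut; intro v hv hf
      simp only [Fml.and, Fml.neg, hv]; tauto
    · have hψφ : ψ = φ := by
        rcases Set.mem_insert_iff.1 (hl' ψ hψ) with h' | h'
        · exact h'
        · exact absurd h' hmemΓ
      subst hψφ
      apply ProvE.taut; intro v hv hf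
      simp only [Fml.and, Fml.neg, hv]; tauto
  have hcontr : ProvE Ax (imp (and φ (foldC m)) Fml.fls) := imp_trans hstep hp'
  have t : ProvE Ax (imp (imp (and φ (foldC m)) Fml.fls) (imp (foldC m) (Fml.neg φ))) := by
    apply ProvE.taut; intro v hv hf
    simp only [Fml.and, Fml.neg, hv]; tauto
  exact mcs_ded_s15 hΓ hmem (t.mp hcontr)

lemma mcs_and (hΓ : MCSE Ax Γ) (h1 : φ ∈ Γ) (h2 : ψ ∈ Γ) : Fml.and φ ψ ∈ Γ := by
  refine mcs_mp2 hΓ ?_ h1 h2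
  apply ProvE.taut; intro v hv hf
  simp only [Fml.and, Fml.neg, hv]; tauto

lemma D_mono_prov (h : ProvE Ax (imp φ ψ)) (U : Finset A) :
    ProvE Ax (imp (D U φ) (D U ψ)) :=
  (ProvE.axK U φ ψ).mp (ProvE.nec U h)

lemma dead_of_not_canRel (hΓ : MCSE Ax Γ) {a : A} (h : ¬ canRel {a} Γ Γ) :
    Fml.D {a} Fml.fls ∈ Γ := by
  rw [canRel] at h
  push_neg at h
  obtain ⟨φ, hD, hφ⟩ := h
  have hnφ : Fml.neg φ ∈ Γ := mcs_neg hΓ hφ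
  have hDD : Fml.D {a} (Fml.D {a} φ) ∈ Γ := mcs_mp hΓ hD (ProvE.ax4 _ _)
  have hdn : ProvE Ax (imp φ (Fml.neg (Fml.neg φ))) := by
    apply ProvE.taut; intro v hv hf; simp only [Fml.neg, hv]; tauto
  -- D{a} (D{a} ¬¬φ) ∈ Γ
  have hD1 : Fml.D {a} (Fml.D {a} (Fml.neg (Fml.neg φ))) ∈ Γ :=
    mcs_mp hΓ hDD (D_mono_prov (D_mono_prov hdn _) _)
  -- D{a} (¬ D{a} ¬¬φ) ∈ Γ  (from axB applied to ¬φ)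
  have hD2 : Fml.D {a} (Fml.neg (Fml.D {a} (Fml.neg (Fml.neg φ)))) ∈ Γ :=
    mcs_mp hΓ hnφ (ProvE.axB {a} (Fml.neg φ))
  -- combine to D{a} ⊥
  set θ := Fml.D {a} (Fml.neg (Fml.neg φ)) with hθ
  have h0 : ProvE Ax (imp θ (imp (Fml.neg θ) Fml.fls)) := by
    apply ProvE.taut; intro v hv hf; simp only [Fml.neg, hv]; tauto
  have hK1 : ProvE Ax (imp (Fml.D {a} θ) (Fml.D {a} (imp (Fml.neg θ) Fml.fls))) :=
    D_mono_prov h0 _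
  have hK2 : ProvE Ax (imp (Fml.D {a} θ)
      (imp (Fml.D {a} (Fml.neg θ)) (Fml.D {a} Fml.fls))) :=
    imp_trans hK1 (ProvE.axK {a} (Fml.neg θ) Fml.fls)
  exact mcs_mp2 hΓ hK2 hD1 hD2

lemma deadG_mem (hΓ : MCSE Ax Γ) (V : Finset A)
    (h : ∀ a ∈ V, Fml.D {a} Fml.fls ∈ Γ) : deadG V ∈ Γ := by
  rw [deadG]
  have key : ∀ l : List A, (∀ a ∈ l, Fml.D {a} Fml.fls ∈ Γ) →
      (l.map fun a => Fml.D {a} Fml.fls).foldr Fml.and Fml.tru ∈ Γ := by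
    intro l
    induction l with
    | nil =>
      intro _
      refine mcs_thm hΓ ?_
      apply ProvE.taut; intro v hv hf
      simp only [List.foldr, List.map, Fml.tru, Fml.neg, hv]; tauto
    | cons a t ih =>
      intro h'
      exact mcs_and hΓ (h' a List.mem_cons_self)
        (ih fun b hb => h' b (List.mem_cons_of_mem _ hb))
  exact key V.toList fun a ha => h a (Finset.mem_toList.1 ha)

lemma deadG_elim (hΓ : MCSE Ax Γ) {V : Finset A} (hd : deadG V ∈ Γ) {a : A}
    (ha : a ∈ V) : Fml.D {a} Fml.fls ∈ Γ := by
  refine mcs_mp hΓ hd ?_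
  exact proj (List.mem_map.2 ⟨a, Finset.mem_toList.2 ha, rfl⟩)

lemma sat_and {M : GEM A} {w : M.W} :
    Sat M w (Fml.and φ ψ) ↔ Sat M w φ ∧ Sat M w ψ := by
  simp only [Fml.and, Fml.neg, Sat]; tauto

lemma sat_alive {M : GEM A} {w : M.W} {U : Finset A} :
    Sat M w (Fml.alive U) ↔ ∃ w', M.rel U w w' := by
  constructor
  · intro h
    by_contra hc
    push_neg at hc
    exact h fun w' hw' => absurd hw' (hc w')
  · rintro ⟨w', hw'⟩ h
    exact h w' hw' fun x => x

lemma sat_fold {M : GEM A} {w : M.W} {l : List (Fml A)} :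
    Sat M w (foldC l) ↔ ∀ φ ∈ l, Sat M w φ := by
  induction l with
  | nil => simp [Sat, Fml.tru, Fml.neg]
  | cons a t ih => simp [List.foldr, sat_and, ih]

lemma sat_deadG {M : GEM A} {w : M.W} {V : Finset A} :
    Sat M w (deadG V) ↔ ∀ a ∈ V, ∀ w', ¬ M.rel {a} w w' := by
  rw [deadG]
  rw [show ((V.toList.map fun a => Fml.D {a} Fml.fls).foldr Fml.and Fml.tru)
      = foldC (V.toList.map fun a => Fml.D {a} Fml.fls) from rfl, sat_fold]
  constructor
  · intro h a ha w' hw'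
    exact h _ (List.mem_map.2 ⟨a, Finset.mem_toList.2 ha, rfl⟩) w' hw'
  · intro h φ hφ
    obtain ⟨a, ha, rfl⟩ := List.mem_map.1 hφ
    intro w' hw'
    exact h a (Finset.mem_toList.1 ha) w' hw'

end Helpers

/-- Axiom Min is valid in every minimal generalized epistemic model, and in the
canonical model of EC_n + Min there are no strict sub-worlds: if
`live(Γ) ⊊ live(Δ)` then `Γ ≁_{live(Γ)} Δ`. -/
theorem stmt15 :
    (∀ M : GEM A,
      (∀ w w' : M.W, liveF M w ⊂ liveF M w' → ¬ M.rel (liveF M w) w w') →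
      ∀ (w : M.W) (U : Finset A),
        Sat M w (Fml.imp (Fml.and (Fml.alive U) (deadG Uᶜ)) (Fml.D U (deadG Uᶜ)))) ∧
    (∀ Γ Δ : Set (Fml A), MCSE (AxMin (A := A)) Γ → MCSE AxMin Δ →
      liveC Γ ⊂ liveC Δ → ¬ canRel (liveC Γ) Γ Δ) := by
  constructor
  · -- Part 1: Min is valid in minimal models
    intro M hmin w U
    intro hsat
    obtain ⟨halive, hdead⟩ := sat_and.1 hsat
    obtain ⟨w₀, hw₀⟩ := sat_alive.1 halive
    have hUww : M.rel U w w := M.trans _ _ _ _ hw₀ (M.symm _ _ _ hw₀)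
    have hdead' : ∀ a ∉ U, ∀ w', ¬ M.rel {a} w w' := by
      intro a ha w' hw'
      exact (sat_deadG.1 hdead) a (Finset.mem_compl.2 ha) w' hw'
    have hliveW : liveF M w = U := by
      ext a
      simp only [liveF, Finset.mem_filter, Finset.mem_univ, true_and]
      constructor
      · intro h; by_contra haU; exact hdead' a haU w h
      · intro h
        exact M.mono {a} U (Finset.singleton_subset_iff.2 h) w w hUww
    intro w' hrel
    rw [sat_deadG]
    intro a ha w'' hrel''
    have hrelU' : M.rel U w' w' := M.trans _ _ _ _ (M.symm _ _ _ hrel) hrel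
    have hrela' : M.rel {a} w' w' := M.trans _ _ _ _ hrel'' (M.symm _ _ _ hrel'')
    have hss : liveF M w ⊂ liveF M w' := by
      rw [hliveW]
      constructor
      · intro b hb
        simp only [liveF, Finset.mem_filter, Finset.mem_univ, true_and]
        exact M.mono {b} U (Finset.singleton_subset_iff.2 hb) w' w' hrelU'
      · intro hsup
        have haU : a ∈ U := hsup (by
          simp only [liveF, Finset.mem_filter, Finset.mem_univ, true_and]
          exact hrela')
        exact (Finset.mem_compl.1 ha) haU
    exact hmin w w' hss (hliveW ▸ hrel)
  · -- Part 2: no strict sub-worlds in the canonical model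
    intro Γ Δ hΓ hΔ hsub hcan
    set U := liveC Γ with hU
    by_cases hDU : Fml.D U Fml.fls ∈ Γ
    · exact mcs_fls_s15 hΔ (hcan _ hDU)
    · have halive : Fml.alive U ∈ Γ := by
        apply mcs_neg hΓ
        intro hD
        refine hDU (mcs_mp hΓ hD (D_mono_prov ?_ U))
        apply ProvE.taut; intro v hv hf
        simp only [Fml.neg, Fml.tru, hv]; tauto
      have hdeadc : deadG Uᶜ ∈ Γ := by
        refine deadG_mem hΓ _ fun a ha => dead_of_not_canRel hΓ ?_
        intro hc
        have : a ∈ liveC Γ := by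
          simp only [liveC, Finset.mem_filter, Finset.mem_univ, true_and]
          exact hc
        exact (Finset.mem_compl.1 ha) (hU ▸ this)
      have hmin : Fml.imp (Fml.and (Fml.alive U) (deadG Uᶜ)) (Fml.D U (deadG Uᶜ)) ∈ Γ :=
        mcs_thm hΓ (ProvE.extra ⟨U, rfl⟩)
      have hand : Fml.and (Fml.alive U) (deadG Uᶜ) ∈ Γ := mcs_and hΓ halive hdeadc
      have hDdead : Fml.D U (deadG Uᶜ) ∈ Γ := by
        refine mcs_mp2 hΓ ?_ hand hmin
        apply ProvE.taut; intro v hv hf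
        simp only [hv]; tauto
      have hdeadΔ : deadG Uᶜ ∈ Δ := hcan _ hDdead
      obtain ⟨a, haΔ, haU⟩ := Finset.exists_of_ssubset hsub
      have hda : Fml.D {a} Fml.fls ∈ Δ := deadG_elim hΔ hdeadΔ (Finset.mem_compl.2 haU)
      have hcr : canRel {a} Δ Δ := by
        have := (Finset.mem_filter.1 haΔ).2
        exact this
      exact mcs_fls_s15 hΔ (hcr _ hda)
end
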